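/- If A is a nonempty ZFC set every member of which is an ordinal, then the intersection ⋂₀ A (the sInter of A) is an ordinal, and moreover ⋂₀ A ∈ A (so ⋂₀ A is the membership-least element of A). -/

import Mathlib

/-- A ZFC set is an ordinal (in the paper's sense) if it is membership transitive
and every member is membership transitive. -/
def ZFSet.IsOrdinal' (x : ZFSet) : Prop :=
  x.IsTransitive ∧ ∀ y ∈ x, ZFSet.IsTransitive y

theorem ZFSet.IsOrdinal'.mem {x y : ZFSet} (hx : x.IsOrdinal') (hy : y ∈ x) :
    y.IsOrdinal' :=
  ⟨hx.2 y hy, fun z hz => hx.2 z (hx.1.mem_trans hz hy)⟩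

/-- Trichotomy for paper-ordinals. -/
theorem ZFSet.IsOrdinal'.trichotomy : ∀ x y : ZFSet, x.IsOrdinal' → y.IsOrdinal' →
    x ∈ y ∨ x = y ∨ y ∈ x := by
  intro x
  induction x using ZFSet.inductionOn with
  | h x IHx =>
    intro y
    induction y using ZFSet.inductionOn with
    | h y IHy =>
      intro hx hy
      by_cases hxy : x ∈ y
      · exact Or.inl hxy
      by_cases hyx : y ∈ x
      · exact Or.inr (Or.inr hyx)
      refine Or.inr (Or.inl (ZFSet.ext fun z => ⟨fun hz => ?_, fun hz => ?_⟩))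
      · rcases IHx z hz y (hx.mem hz) hy with h | h | h
        · exact h
        · exact absurd (h ▸ hz) hyx
        · exact absurd (hx.1.mem_trans h hz) hyx
      · rcases IHy z hz hx (hy.mem hz) with h | h | h
        · exact absurd (hy.1.mem_trans h hz) hxy
        · exact absurd (h ▸ hz) hxy
        · exact h

/-- The intersection of a nonempty ZFC set of ordinals is an ordinal and
is a member of the set (its membership-least element). -/
theorem ZFSet.isOrdinal'_sInter {A : ZFSet} (hne : A.Nonempty)
    (hA : ∀ y ∈ A, ZFSet.IsOrdinal' y) :
    (ZFSet.sInter A : ZFSet).IsOrdinal' ∧ (ZFSet.sInter A : ZFSet) ∈ A := by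
  obtain ⟨a, ha⟩ := hne
  have hne' : A.Nonempty := ⟨a, ha⟩
  have hmem : ∀ z, z ∈ (ZFSet.sInter A : ZFSet) ↔ ∀ y ∈ A, z ∈ y := fun z => mem_sInter hne'
  have hord : (ZFSet.sInter A : ZFSet).IsOrdinal' := by
    constructor
    · intro z hz w hw
      rw [hmem] at hz ⊢
      exact fun y hy => (hA y hy).1.mem_trans hw (hz y hy)
    · intro z hz
      exact ((hA a ha).mem ((hmem z).1 hz a ha)).1
  refine ⟨hord, ?_⟩
  by_contra hnot
  have : (ZFSet.sInter A : ZFSet) ∈ (ZFSet.sInter A : ZFSet) := by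
    rw [hmem]
    intro y hy
    rcases ZFSet.IsOrdinal'.trichotomy _ _ hord (hA y hy) with h | h | h
    · exact h
    · exact absurd (h ▸ hy) hnot
    · exact absurd ((hmem y).1 h y hy) (ZFSet.mem_irrefl y)
  exact ZFSet.mem_irrefl _ this
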